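/- If G[S] and G[S'] are two locally h-clique densest subgraphs of G with S ≠ S', then S ∩ S' = ∅. -/

import Mathlib

open Finset

variable {V : Type*} [Fintype V] [DecidableEq V]

/-- `Ψ_h(G[S])`: the set of `h`-cliques of `G` all of whose vertices lie in `S`
(equivalently, the `h`-cliques of the induced subgraph `G[S]`). -/
def cliquesIn (G : SimpleGraph V) [DecidableRel G.Adj] (h : ℕ) (S : Finset V) :
    Finset (Finset V) :=
  Finset.univ.filter fun c => G.IsNClique h c ∧ c ⊆ S

/-- the `h`-clique density `d_h(G[S]) = |Ψ_h(G[S])| / |S|`. -/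
noncomputable def cliqueDensity (G : SimpleGraph V) [DecidableRel G.Adj] (h : ℕ)
    (S : Finset V) : ℝ :=
  ((cliquesIn G h S).card : ℝ) / (S.card : ℝ)

/-- `G[S]` is `h`-clique `ρ`-compact: `S` is nonempty, the induced subgraph is
connected, and removing any nonempty `U ⊆ S` removes at least `ρ·|U|` `h`-cliques. -/
def IsCliqueCompact (G : SimpleGraph V) [DecidableRel G.Adj] (h : ℕ) (ρ : ℝ)
    (S : Finset V) : Prop :=
  S.Nonempty ∧ (G.induce (S : Set V)).Connected ∧
    ∀ U ⊆ S, U.Nonempty →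
      ρ * (U.card : ℝ) ≤ ((cliquesIn G h S).card : ℝ) - ((cliquesIn G h (S \ U)).card : ℝ)

/-- `G[S]` is a locally `h`-clique densest subgraph of `G`. -/
def IsLhCDS (G : SimpleGraph V) [DecidableRel G.Adj] (h : ℕ) (S : Finset V) : Prop :=
  IsCliqueCompact G h (cliqueDensity G h S) S ∧
    ¬ ∃ S' : Finset V, S ⊂ S' ∧ IsCliqueCompact G h (cliqueDensity G h S) S'

/-- the `h`-clique compact number `φ_h(u)` of a vertex `u`. -/
noncomputable def compactNumber (G : SimpleGraph V) [DecidableRel G.Adj] (h : ℕ)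
    (u : V) : ℝ :=
  sSup {ρ : ℝ | 0 ≤ ρ ∧ ∃ S : Finset V, u ∈ S ∧ IsCliqueCompact G h ρ S}

/-- `α` is a feasible solution to the convex program `CP(G,h)`: each `h`-clique
distributes a unit weight, nonnegatively, among its vertices. -/
def CPFeasible (G : SimpleGraph V) [DecidableRel G.Adj] (h : ℕ)
    (α : Finset V → V → ℝ) : Prop :=
  (∀ ψ ∈ cliquesIn G h Finset.univ, ∀ u ∈ ψ, 0 ≤ α ψ u) ∧
    (∀ ψ ∈ cliquesIn G h Finset.univ, ∑ u ∈ ψ, α ψ u = 1)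

/-- `r(u)`: the total weight received by vertex `u` under `α`. -/
def cpR (G : SimpleGraph V) [DecidableRel G.Adj] (h : ℕ) (α : Finset V → V → ℝ)
    (u : V) : ℝ :=
  ∑ ψ ∈ (cliquesIn G h Finset.univ).filter (fun ψ => u ∈ ψ), α ψ u

/-- `α` is an optimal solution to `CP(G,h)`: it is feasible and minimizes
`Σ_u r(u)²` over all feasible solutions. -/
def CPOptimal (G : SimpleGraph V) [DecidableRel G.Adj] (h : ℕ)
    (α : Finset V → V → ℝ) : Prop :=
  CPFeasible G h α ∧
    ∀ β : Finset V → V → ℝ, CPFeasible G h β →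
      ∑ u : V, (cpR G h α u) ^ 2 ≤ ∑ u : V, (cpR G h β u) ^ 2

lemma cliquesIn_mono (G : SimpleGraph V) [DecidableRel G.Adj] (h : ℕ) {A B : Finset V}
    (hAB : A ⊆ B) : cliquesIn G h A ⊆ cliquesIn G h B := by
  intro c hc
  simp only [cliquesIn, mem_filter] at *
  exact ⟨hc.1, hc.2.1, hc.2.2.trans hAB⟩

lemma key_count (G : SimpleGraph V) [DecidableRel G.Adj] (h : ℕ) (S S' U : Finset V) :
    (cliquesIn G h S).card - (cliquesIn G h (S \ U)).card
      + ((cliquesIn G h S').card - (cliquesIn G h (S' \ (U \ S))).card)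
      ≤ (cliquesIn G h (S ∪ S')).card - (cliquesIn G h ((S ∪ S') \ U)).card := by
  set A := cliquesIn G h S \ cliquesIn G h (S \ U) with hA
  set B := cliquesIn G h S' \ cliquesIn G h (S' \ (U \ S)) with hB
  set D := cliquesIn G h (S ∪ S') \ cliquesIn G h ((S ∪ S') \ U) with hD
  have hAD : A ⊆ D := by
    intro c hc
    simp only [hA, hD, mem_sdiff, cliquesIn, mem_filter, mem_univ, true_and] at *
    obtain ⟨⟨hcl, hcS⟩, hnot⟩ := hc
    refine ⟨⟨hcl, hcS.trans subset_union_left⟩, fun ⟨_, hsub⟩ => hnot ⟨hcl, ?_⟩⟩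
    intro v hv
    have := hsub hv
    simp only [mem_sdiff] at this ⊢
    exact ⟨hcS hv, this.2⟩
  have hBD : B ⊆ D := by
    intro c hc
    simp only [hB, hD, mem_sdiff, cliquesIn, mem_filter, mem_univ, true_and] at *
    obtain ⟨⟨hcl, hcS⟩, hnot⟩ := hc
    refine ⟨⟨hcl, hcS.trans subset_union_right⟩, fun ⟨_, hsub⟩ => hnot ⟨hcl, ?_⟩⟩
    intro v hv
    have := hsub hv
    simp only [mem_sdiff] at this ⊢
    exact ⟨hcS hv, fun hvU => this.2 hvU.1⟩
  have hdisj : Disjoint A B := by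
    rw [Finset.disjoint_left]
    intro c hcA hcB
    simp only [hA, hB, mem_sdiff, cliquesIn, mem_filter, mem_univ, true_and] at hcA hcB
    obtain ⟨⟨hcl, hcS⟩, _⟩ := hcA
    obtain ⟨⟨_, hcS'⟩, hnot⟩ := hcB
    apply hnot ⟨hcl, ?_⟩
    intro v hv
    simp only [mem_sdiff]
    exact ⟨hcS' hv, fun hvU => hvU.2 (hcS hv)⟩
  have h1 : A.card + B.card ≤ D.card := by
    rw [← Finset.card_union_of_disjoint hdisj]
    exact Finset.card_le_card (Finset.union_subset hAD hBD)
  have e1 : A.card = (cliquesIn G h S).card - (cliquesIn G h (S \ U)).card :=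
    Finset.card_sdiff_of_subset (cliquesIn_mono G h (sdiff_subset))
  have e2 : B.card = (cliquesIn G h S').card - (cliquesIn G h (S' \ (U \ S))).card :=
    Finset.card_sdiff_of_subset (cliquesIn_mono G h (sdiff_subset))
  have e3 : D.card = (cliquesIn G h (S ∪ S')).card - (cliquesIn G h ((S ∪ S') \ U)).card :=
    Finset.card_sdiff_of_subset (cliquesIn_mono G h (sdiff_subset))
  omega

lemma density_nonneg (G : SimpleGraph V) [DecidableRel G.Adj] (h : ℕ) (S : Finset V) :
    0 ≤ cliqueDensity G h S :=
  div_nonneg (by positivity) (by positivity)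

lemma density_mul_card (G : SimpleGraph V) [DecidableRel G.Adj] (h : ℕ) {S : Finset V}
    (hS : S.Nonempty) : cliqueDensity G h S * (S.card : ℝ) = ((cliquesIn G h S).card : ℝ) := by
  rw [cliqueDensity, div_mul_cancel₀]
  exact Nat.cast_ne_zero.2 (Finset.card_ne_zero.2 hS)

/-- nested case: a proper LhCDS inside another LhCDS is impossible. -/
lemma nested_case (G : SimpleGraph V) [DecidableRel G.Adj] (h : ℕ) {S S' : Finset V}
    (hS : IsLhCDS G h S) (hS' : IsLhCDS G h S') (hsub : S' ⊂ S) : False := by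
  obtain ⟨⟨hSne, hScon, hScomp⟩, _⟩ := hS
  obtain ⟨⟨hS'ne, _, _⟩, hmax'⟩ := hS'
  set ρ := cliqueDensity G h S with hρ
  set ρ' := cliqueDensity G h S' with hρ'
  have hUne : (S \ S').Nonempty := by
    rw [Finset.sdiff_nonempty]
    exact fun hc => hsub.not_subset hc
  have hkey := hScomp (S \ S') (sdiff_subset) hUne
  rw [Finset.sdiff_sdiff_eq_self hsub.subset] at hkey
  have hcard : ((S \ S').card : ℝ) = (S.card : ℝ) - (S'.card : ℝ) := by
    rw [Finset.card_sdiff_of_subset hsub.subset]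
    have := Finset.card_le_card hsub.subset
    push_cast [this]
    ring
  have hΨS : ρ * (S.card : ℝ) = ((cliquesIn G h S).card : ℝ) := density_mul_card G h hSne
  have hle : ((cliquesIn G h S').card : ℝ) ≤ ρ * (S'.card : ℝ) := by
    rw [hcard] at hkey; nlinarith
  have hρ'le : ρ' ≤ ρ := by
    rw [hρ', cliqueDensity, div_le_iff₀ (by exact_mod_cast Finset.card_pos.2 hS'ne)]
    exact hle
  apply hmax'
  refine ⟨S, hsub, hSne, hScon, fun U hU hUne' => ?_⟩
  calc ρ' * (U.card : ℝ) ≤ ρ * (U.card : ℝ) :=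
        mul_le_mul_of_nonneg_right hρ'le (by positivity)
    _ ≤ _ := hScomp U hU hUne'

/-- overlapping, non-nested case with `d(S) ≤ d(S')`. -/
lemma overlap_case (G : SimpleGraph V) [DecidableRel G.Adj] (h : ℕ) {S S' : Finset V}
    (hS : IsLhCDS G h S) (hS' : IsLhCDS G h S')
    (hρle : cliqueDensity G h S ≤ cliqueDensity G h S')
    (hint : (S ∩ S').Nonempty) (hd : (S' \ S).Nonempty) : False := by
  obtain ⟨⟨hSne, hScon, hScomp⟩, hmax⟩ := hS
  obtain ⟨⟨hS'ne, hS'con, hS'comp⟩, _⟩ := hS'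
  set ρ := cliqueDensity G h S with hρ
  set ρ' := cliqueDensity G h S' with hρ'
  apply hmax
  refine ⟨S ∪ S', Finset.ssubset_iff_of_subset subset_union_left |>.2 ?_, ?_, ?_, ?_⟩
  · obtain ⟨x, hx⟩ := hd
    rw [Finset.mem_sdiff] at hx
    exact ⟨x, Finset.mem_union_right _ hx.1, hx.2⟩
  · exact hSne.mono subset_union_left
  · rw [Finset.coe_union]
    apply SimpleGraph.induce_union_connected hScon.preconnected hS'con.preconnected
    obtain ⟨x, hx⟩ := hint
    rw [Finset.mem_inter] at hx
    exact ⟨x, hx.1, hx.2⟩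
  · intro U hU hUne
    have hρ0 : 0 ≤ ρ := density_nonneg G h S
    have hρ'0 : 0 ≤ ρ' := density_nonneg G h S'
    -- term for S
    have h1 : ρ * ((U ∩ S).card : ℝ)
        ≤ ((cliquesIn G h S).card : ℝ) - ((cliquesIn G h (S \ U)).card : ℝ) := by
      rcases (U ∩ S).eq_empty_or_nonempty with he | hne
      · have hdisj : Disjoint S U :=
          (Finset.disjoint_iff_inter_eq_empty.2 he).symm
        rw [he, Finset.sdiff_eq_self_of_disjoint hdisj]
        simp
      · have := hScomp (U ∩ S) inter_subset_right hne
        rwa [show S \ (U ∩ S) = S \ U by ext x; simp only [Finset.mem_sdiff, Finset.mem_inter]; tauto] at this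
    -- term for S'
    have h2 : ρ' * ((U \ S).card : ℝ)
        ≤ ((cliquesIn G h S').card : ℝ) - ((cliquesIn G h (S' \ (U \ S))).card : ℝ) := by
      rcases (U \ S).eq_empty_or_nonempty with he | hne
      · rw [he]
        simp
      · refine hS'comp (U \ S) ?_ hne
        intro x hx
        rw [Finset.mem_sdiff] at hx
        rcases Finset.mem_union.1 (hU hx.1) with h | h
        · exact absurd h hx.2
        · exact h
    have hkey := key_count G h S S' U
    have hm1 := cliquesIn_mono G h (sdiff_subset (s := S) (t := U))
    have hm2 := cliquesIn_mono G h (sdiff_subset (s := S') (t := U \ S))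
    have hm3 := cliquesIn_mono G h (sdiff_subset (s := S ∪ S') (t := U))
    have hc1 := Finset.card_le_card hm1
    have hc2 := Finset.card_le_card hm2
    have hc3 := Finset.card_le_card hm3
    have hkeyR : ((cliquesIn G h S).card : ℝ) - ((cliquesIn G h (S \ U)).card : ℝ)
        + (((cliquesIn G h S').card : ℝ) - ((cliquesIn G h (S' \ (U \ S))).card : ℝ))
        ≤ ((cliquesIn G h (S ∪ S')).card : ℝ)
          - ((cliquesIn G h ((S ∪ S') \ U)).card : ℝ) := by
      rw [← Nat.cast_sub hc1, ← Nat.cast_sub hc2, ← Nat.cast_sub hc3, ← Nat.cast_add]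
      exact_mod_cast hkey
    have hsplit : ((U ∩ S).card : ℝ) + ((U \ S).card : ℝ) = (U.card : ℝ) := by
      exact_mod_cast congrArg (Nat.cast (R := ℝ)) (Finset.card_inter_add_card_sdiff U S)
    calc ρ * (U.card : ℝ) = ρ * ((U ∩ S).card : ℝ) + ρ * ((U \ S).card : ℝ) := by
          rw [← hsplit]; ring
      _ ≤ ρ * ((U ∩ S).card : ℝ) + ρ' * ((U \ S).card : ℝ) := by
          have : ρ * ((U \ S).card : ℝ) ≤ ρ' * ((U \ S).card : ℝ) :=
            mul_le_mul_of_nonneg_right hρle (by positivity)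
          linarith
      _ ≤ _ := by linarith [h1, h2, hkeyR]

/-- Two distinct locally `h`-clique densest subgraphs are disjoint. -/
theorem stmt_2 (G : SimpleGraph V) [DecidableRel G.Adj] (h : ℕ) (hh : 2 ≤ h)
    (S S' : Finset V) (hS : IsLhCDS G h S) (hS' : IsLhCDS G h S')
    (hne : S ≠ S') :
    S ∩ S' = ∅ := by
  by_contra hc
  have hint : (S ∩ S').Nonempty := Finset.nonempty_iff_ne_empty.2 hc
  by_cases h1 : S ⊆ S'
  · exact nested_case G h hS' hS ⟨h1, fun hc' => hne (Finset.Subset.antisymm h1 hc')⟩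
  by_cases h2 : S' ⊆ S
  · exact nested_case G h hS hS' ⟨h2, fun hc' => hne (Finset.Subset.antisymm hc' h2)⟩
  have hd1 : (S' \ S).Nonempty := Finset.sdiff_nonempty.2 h2
  have hd2 : (S \ S').Nonempty := Finset.sdiff_nonempty.2 h1
  rcases le_total (cliqueDensity G h S) (cliqueDensity G h S') with hle | hle
  · exact overlap_case G h hS hS' hle hint hd1
  · exact overlap_case G h hS' hS hle (by rwa [Finset.inter_comm] at hint) hd2
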